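/- Let η_1, ..., η_K be nonnegative reals summing to 1 with all partial sums Σ_{ℓ=1}^{m} η_ℓ ≠ 1/2. For each k ∈ {1,...,K-1}, let f_k* be a minimizer of the k-th conditional hinge risk R_k(f) = (Σ_{ℓ=1}^{k} η_ℓ)·max(0, 1+f) + (Σ_{ℓ=k+1}^{K} η_ℓ)·max(0, 1-f). Then sign(f_k*) = sign(1/2 - Σ_{ℓ=1}^{k} η_ℓ) for all k, and moreover the sequence sign(f_1*), ..., sign(f_{K-1}*) is monotonically decreasing. -/

import Mathlib

lemma hinge_key (a b f : ℝ) (ha : 0 ≤ a) (hb : 0 ≤ b) (hab : a + b = 1)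
    (hne : a ≠ 1 / 2)
    (hmin : ∀ g : ℝ, a * max 0 (1 + f) + b * max 0 (1 - f) ≤
        a * max 0 (1 + g) + b * max 0 (1 - g)) :
    Real.sign f = Real.sign (1 / 2 - a) := by
  rcases lt_or_gt_of_ne hne with hlt | hgt
  · -- a < 1/2 : minimizer is positive
    have h1 := hmin 1
    rw [show max 0 (1 + (1:ℝ)) = 2 by norm_num, show max 0 (1 - (1:ℝ)) = 0 by norm_num] at h1
    have hf : 0 < f := by
      by_contra h
      push_neg at h
      have hm : max 0 (1 - f) = 1 - f := max_eq_right (by linarith)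
      rw [hm] at h1
      rcases le_or_gt (1 + f) 0 with h2 | h2
      · rw [max_eq_left (by linarith)] at h1
        nlinarith
      · rw [max_eq_right (by linarith)] at h1
        nlinarith
    rw [Real.sign_of_pos hf, Real.sign_of_pos (by linarith : (0:ℝ) < 1 / 2 - a)]
  · -- a > 1/2 : minimizer is negative
    have h1 := hmin (-1)
    rw [show max 0 (1 + (-1:ℝ)) = 0 by norm_num, show max 0 (1 - (-1:ℝ)) = 2 by norm_num] at h1
    have hf : f < 0 := by
      by_contra h
      push_neg at h
      have hm : max 0 (1 + f) = 1 + f := max_eq_right (by linarith)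
      rw [hm] at h1
      rcases le_or_gt (1 - f) 0 with h2 | h2
      · rw [max_eq_left (by linarith)] at h1
        nlinarith
      · rw [max_eq_right (by linarith)] at h1
        nlinarith
    rw [Real.sign_of_neg hf, Real.sign_of_neg (by linarith : (1:ℝ) / 2 - a < 0)]

/-- Generalized Fisher consistency of the sum-of-hinge-losses ordinal classifier:
each minimizer `f* k` of the k-th conditional hinge risk satisfies
`sign (f* k) = sign (1/2 - ∑_{ℓ=1}^k η_ℓ)`, and the sign sequence is monotonically
decreasing.  `η ℓ` (for `ℓ < K`) is the probability of class `ℓ + 1`. -/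
theorem stmt_9 (K : ℕ) (η : ℕ → ℝ) (hnn : ∀ ℓ < K, 0 ≤ η ℓ)
    (hsum : ∑ ℓ ∈ Finset.range K, η ℓ = 1)
    (hne : ∀ m, 1 ≤ m → m ≤ K - 1 → (∑ ℓ ∈ Finset.range m, η ℓ) ≠ 1 / 2)
    (fstar : ℕ → ℝ)
    (hmin : ∀ k, 1 ≤ k → k ≤ K - 1 → ∀ f : ℝ,
      (∑ ℓ ∈ Finset.range k, η ℓ) * max 0 (1 + fstar k) +
          (∑ ℓ ∈ Finset.Ico k K, η ℓ) * max 0 (1 - fstar k) ≤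
        (∑ ℓ ∈ Finset.range k, η ℓ) * max 0 (1 + f) +
          (∑ ℓ ∈ Finset.Ico k K, η ℓ) * max 0 (1 - f)) :
    (∀ k, 1 ≤ k → k ≤ K - 1 →
        Real.sign (fstar k) = Real.sign (1 / 2 - ∑ ℓ ∈ Finset.range k, η ℓ)) ∧
    (∀ k, 1 ≤ k → k + 1 ≤ K - 1 → Real.sign (fstar (k + 1)) ≤ Real.sign (fstar k)) := by
  have main : ∀ k, 1 ≤ k → k ≤ K - 1 →
      Real.sign (fstar k) = Real.sign (1 / 2 - ∑ ℓ ∈ Finset.range k, η ℓ) := by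
    intro k hk1 hk2
    have hkK : k ≤ K := by omega
    have ha : 0 ≤ ∑ ℓ ∈ Finset.range k, η ℓ :=
      Finset.sum_nonneg fun ℓ hℓ => hnn ℓ (by simp at hℓ; omega)
    have hb : 0 ≤ ∑ ℓ ∈ Finset.Ico k K, η ℓ :=
      Finset.sum_nonneg fun ℓ hℓ => hnn ℓ (by simp at hℓ; omega)
    have hab : (∑ ℓ ∈ Finset.range k, η ℓ) + ∑ ℓ ∈ Finset.Ico k K, η ℓ = 1 := by
      rw [Finset.sum_range_add_sum_Ico _ hkK, hsum]
    exact hinge_key _ _ _ ha hb hab (hne k hk1 hk2) (hmin k hk1 hk2)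
  refine ⟨main, fun k hk1 hk2 => ?_⟩
  rw [main k hk1 (by omega), main (k + 1) (by omega) hk2]
  have hmono : (∑ ℓ ∈ Finset.range k, η ℓ) ≤ ∑ ℓ ∈ Finset.range (k + 1), η ℓ := by
    rw [Finset.sum_range_succ]
    have := hnn k (by omega)
    linarith
  have hnk := hne k hk1 (by omega)
  have hnk1 := hne (k + 1) (by omega) hk2
  rcases lt_or_gt_of_ne hnk1 with h1 | h1
  · have h2 : (∑ ℓ ∈ Finset.range k, η ℓ) < 1 / 2 := lt_of_le_of_lt hmono h1
    rw [Real.sign_of_pos (by linarith : (0:ℝ) < 1 / 2 - ∑ ℓ ∈ Finset.range (k + 1), η ℓ),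
      Real.sign_of_pos (by linarith : (0:ℝ) < 1 / 2 - ∑ ℓ ∈ Finset.range k, η ℓ)]
  · rw [Real.sign_of_neg (by linarith : (1:ℝ) / 2 - ∑ ℓ ∈ Finset.range (k + 1), η ℓ < 0)]
    rcases lt_or_gt_of_ne hnk with h2 | h2
    · rw [Real.sign_of_pos (by linarith : (0:ℝ) < 1 / 2 - ∑ ℓ ∈ Finset.range k, η ℓ)]
      norm_num
    · rw [Real.sign_of_neg (by linarith : (1:ℝ) / 2 - ∑ ℓ ∈ Finset.range k, η ℓ < 0)]
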